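/- Let H be a group acting on a set S such that the stabilizer H_s of every s ∈ S is finite, and let Γ ≤ H be a subgroup of finite index d = [H : Γ]. Then Σ_{O ∈ Γ\S} 1/|Γ_{x_O}| = d · Σ_{O' ∈ H\S} 1/|H_{x_{O'}}| as elements of [0,∞], where the first sum runs over all Γ-orbits in S and the second over all H-orbits in S, with x_O, x_{O'} arbitrary representatives. -/

import Mathlib

open SimpleGraph MulAction
open scoped ENNReal

universe u

variable {V : Type u}

/-- The automorphism group of a simple graph, as a subgroup of the permutation group
of its vertex set. -/
def SimpleGraph.autGroup (G : SimpleGraph V) : Subgroup (Equiv.Perm V) where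
  carrier := {f | ∀ u v : V, G.Adj (f u) (f v) ↔ G.Adj u v}
  one_mem' := by intro u v; simp
  mul_mem' := by
    intro a b ha hb u v
    simp only [Set.mem_setOf_eq, Equiv.Perm.mul_apply] at *
    rw [ha, hb]
  inv_mem' := by
    intro a ha u v
    simpa using (ha (a⁻¹ u) (a⁻¹ v)).symm

/-- A subgroup of the permutation group of the vertices is discrete if all vertex
stabilizers are finite. -/
def IsDiscreteSubgroup (Γ : Subgroup (Equiv.Perm V)) : Prop :=
  ∀ v : V, Finite (stabilizer Γ v)

/-- The `S`-covolume of a subgroup `Γ` of the permutation group of the vertices: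
the sum of `1 / |Γ_v|` over the `Γ`-orbits meeting `S` (for `Γ`-invariant `S`, the
orbits contained in `S`), where `v` is a representative of the orbit. -/
noncomputable def covolume (Γ : Subgroup (Equiv.Perm V)) (S : Set V) : ℝ≥0∞ :=
  ∑' O : {O : Quotient (orbitRel Γ V) // Quotient.out O ∈ S},
    ((Nat.card (stabilizer Γ (Quotient.out (O : Quotient (orbitRel Γ V))))) : ℝ≥0∞)⁻¹

/-- A lattice: a discrete subgroup with finite covolume with respect to the set of
all vertices. -/
def IsGraphLattice (Γ : Subgroup (Equiv.Perm V)) : Prop :=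
  IsDiscreteSubgroup Γ ∧ covolume Γ Set.univ ≠ ⊤

/-- A nonuniform lattice: a lattice with infinitely many orbits of vertices. -/
def IsNonuniformLattice (Γ : Subgroup (Equiv.Perm V)) : Prop :=
  IsGraphLattice Γ ∧ Infinite (Quotient (orbitRel Γ V))

/-- `f ⪯ g` : there are `a, b` with `f k ≤ a * g (k + b)` for all `k`. -/
def GrowthLE (f g : ℕ → ℕ) : Prop :=
  ∃ a b : ℕ, ∀ k : ℕ, f k ≤ a * g (k + b)

/-- Equivalence of growth types. -/
def GrowthEquiv (f g : ℕ → ℕ) : Prop :=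
  GrowthLE f g ∧ GrowthLE g f

/-- The number of `Γ`-orbits of vertices meeting the ball of radius `k` about `x₀`. -/
noncomputable def quotientGrowth (G : SimpleGraph V) (Γ : Subgroup (Equiv.Perm V))
    (x₀ : V) (k : ℕ) : ℕ :=
  Nat.card {O : Quotient (orbitRel Γ V) //
    ∃ v : V, Quotient.mk (orbitRel Γ V) v = O ∧ G.dist v x₀ ≤ k}

/-- The maximal order of a `Γ`-stabilizer of a vertex in the ball of radius `k`
about `x₀`. -/
noncomputable def stabilizerGrowth (G : SimpleGraph V) (Γ : Subgroup (Equiv.Perm V))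
    (x₀ : V) (k : ℕ) : ℕ :=
  sSup {c : ℕ | ∃ v : V, G.dist v x₀ ≤ k ∧ c = Nat.card (stabilizer Γ v)}

/-- The `p`-order of a (finite) group order `k` : the largest power of `p` dividing `k`. -/
def pOrder (p k : ℕ) : ℕ := p ^ (k.factorization p)

/-- The maximal `p`-order of a `Γ`-stabilizer of a vertex in the ball of radius `k`
about `x₀`. -/
noncomputable def pStabilizerGrowth (G : SimpleGraph V) (Γ : Subgroup (Equiv.Perm V))
    (p : ℕ) (x₀ : V) (k : ℕ) : ℕ :=
  sSup {c : ℕ | ∃ v : V, G.dist v x₀ ≤ k ∧ c = pOrder p (Nat.card (stabilizer Γ v))}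

/-- `Γ` and `Γ'` are commensurable in (a subgroup) `A` of the permutation group:
some `A`-conjugate of `Γ` intersects `Γ'` in finite index in both. -/
def CommensurableIn {GG : Type u} [Group GG] (A Γ Γ' : Subgroup GG) : Prop :=
  ∃ g ∈ A, Subgroup.Commensurable (Subgroup.map (MulAut.conj g).toMonoidHom Γ) Γ'

/-- An `(m,n)`-biregular tree with parts `V₀`, `V₁`. -/
structure IsBiregularTree (G : SimpleGraph V) (V₀ V₁ : Set V) (m n : ℕ) : Prop where
  connected : G.Connected
  acyclic : G.IsAcyclic
  disjoint : Disjoint V₀ V₁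
  union : V₀ ∪ V₁ = Set.univ
  adj_parts : ∀ ⦃u v : V⦄, G.Adj u v → (u ∈ V₀ ∧ v ∈ V₁) ∨ (u ∈ V₁ ∧ v ∈ V₀)
  degree₀ : ∀ v ∈ V₀, (G.neighborSet v).Finite ∧ (G.neighborSet v).ncard = m
  degree₁ : ∀ v ∈ V₁, (G.neighborSet v).Finite ∧ (G.neighborSet v).ncard = n

/-- A star tree of degree `m` with parts `V₀`, `V₁`. -/
structure IsStarTree (A : SimpleGraph V) (V₀ V₁ : Set V) (m : ℕ) : Prop where
  connected : A.Connected
  acyclic : A.IsAcyclic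
  disjoint : Disjoint V₀ V₁
  union : V₀ ∪ V₁ = Set.univ
  adj_parts : ∀ ⦃u v : V⦄, A.Adj u v → (u ∈ V₀ ∧ v ∈ V₁) ∨ (u ∈ V₁ ∧ v ∈ V₀)
  degree₀ : ∀ v ∈ V₀, (A.neighborSet v).Finite ∧ (A.neighborSet v).ncard = m
  degree₁ : ∀ v ∈ V₁, (A.neighborSet v).Finite ∧
    ((A.neighborSet v).ncard = 1 ∨ (A.neighborSet v).ncard = 2)

/-- The quotient graph `Γ\X`: vertices are `Γ`-orbits; two distinct orbits are
adjacent iff some vertex of one is adjacent to some vertex of the other. -/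
def quotientGraph (G : SimpleGraph V) (Γ : Subgroup (Equiv.Perm V)) :
    SimpleGraph (Quotient (orbitRel Γ V)) where
  Adj O O' := O ≠ O' ∧ ∃ u v : V, Quotient.mk (orbitRel Γ V) u = O ∧
    Quotient.mk (orbitRel Γ V) v = O' ∧ G.Adj u v
  symm := ⟨by
    rintro O O' ⟨hne, u, v, hu, hv, huv⟩
    exact ⟨hne.symm, v, u, hv, hu, huv.symm⟩⟩
  loopless := ⟨fun O h => h.1 rfl⟩

/-- An acceptable quotient growth function. -/
structure AcceptableGrowth (f : ℕ → ℕ) : Prop where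
  base : f 0 = 1
  one_le : ∀ j : ℕ, 1 ≤ f (j + 1)
  le_two_mul : ∀ j : ℕ, f (j + 1) ≤ 2 * f j
  summable : Summable fun j : ℕ => (f j : ℝ) / 2 ^ j

/-- An `n`-admissible sequence `s`, indexed by `k ≥ 1`. -/
def NAdmissible (n : ℕ) (s : ℕ → ℕ) : Prop :=
  ∀ k : ℕ, 1 ≤ k → s k ∣ n ∧ 2 < s k ∧ s k ≤ n

/-- The associated function `h j = (s 1 - 1) * ⋯ * (s j - 1)`, with `h 0 = 1`. -/
def admProd (s : ℕ → ℕ) (j : ℕ) : ℕ := ∏ i ∈ Finset.Icc 1 j, (s i - 1)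

private lemma tsum_const_card {α : Type*} [Finite α] (r : ℝ≥0∞) :
    ∑' _ : α, r = (Nat.card α : ℝ≥0∞) * r := by
  cases nonempty_fintype α
  rw [tsum_fintype, Finset.sum_const, Finset.card_univ, Nat.card_eq_fintype_card, nsmul_eq_mul]

/-- If a group `H` acts on a set `S` with finite stabilizers and
`Γ ≤ H` has finite index `d`, then `Vol_S(Γ) = d · Vol_S(H)` as elements of
`[0,∞]`: the sum of `1/|Γ_x|` over `Γ`-orbits equals `d` times the sum of
`1/|H_x|` over `H`-orbits. -/
theorem statement6 {H : Type u} [Group H] {S : Type u} [MulAction H S]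
    (hfin : ∀ s : S, Finite (stabilizer H s))
    (Γ : Subgroup H) {d : ℕ} (hd : Γ.index = d) (hd0 : d ≠ 0) :
    ∑' O : Quotient (orbitRel Γ S),
        ((Nat.card (stabilizer Γ (Quotient.out O))) : ℝ≥0∞)⁻¹
      = (d : ℝ≥0∞) *
        ∑' O' : Quotient (orbitRel H S),
          ((Nat.card (stabilizer H (Quotient.out O'))) : ℝ≥0∞)⁻¹ := by
  classical
  have hQfin : Finite (H ⧸ Γ) :=
    Nat.finite_of_card_ne_zero (by rw [← Subgroup.index_eq_card, hd]; exact hd0)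
  have hΓfin : ∀ s : S, Finite (stabilizer Γ s) := fun s => by
    haveI := hfin s
    exact Finite.of_injective
      (fun γ => (⟨(γ : Γ), γ.2⟩ : stabilizer H s))
      (fun a b hab => by
        have h2 : ((a : Γ) : H) = ((b : Γ) : H) := by
          simpa using congrArg Subtype.val hab
        exact Subtype.ext (Subtype.ext h2))
  let φ : Quotient (orbitRel Γ S) → Quotient (orbitRel H S) :=
    Quotient.map' id fun a b h => by
      obtain ⟨γ, hγ⟩ := h
      exact ⟨(γ : H), hγ⟩
  have hφmk : ∀ a : S, φ (Quotient.mk (orbitRel Γ S) a) = Quotient.mk (orbitRel H S) a :=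
    fun a => rfl
  have key : ∀ O' : Quotient (orbitRel H S),
      (∑' O : φ ⁻¹' {O'},
        ((Nat.card (stabilizer Γ (Quotient.out (O : Quotient (orbitRel Γ S))))) : ℝ≥0∞)⁻¹)
        = (d : ℝ≥0∞) * ((Nat.card (stabilizer H (Quotient.out O'))) : ℝ≥0∞)⁻¹ := by
    intro O'
    set x : S := Quotient.out O' with hx
    set K : Subgroup H := stabilizer H x with hK
    haveI hKfin : Finite K := hfin x
    haveI : MulAction.QuotientAction K Γ := by
      constructor
      intro b a a' h
      show ((b : H) * a)⁻¹ * ((b : H) * a') ∈ Γ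
      rwa [mul_inv_rev, mul_assoc, inv_mul_cancel_left]
    have pwd : ∀ a b : H, (QuotientGroup.leftRel Γ) a b →
        (Quotient.mk (orbitRel Γ S) (a⁻¹ • x)) = Quotient.mk (orbitRel Γ S) (b⁻¹ • x) := by
      intro a b hab
      rw [QuotientGroup.leftRel_apply] at hab
      apply Quotient.sound
      refine ⟨⟨a⁻¹ * b, hab⟩, ?_⟩
      show (a⁻¹ * b) • (b⁻¹ • x) = a⁻¹ • x
      rw [smul_smul]
      congr 1
      group
    let p : H ⧸ Γ → Quotient (orbitRel Γ S) :=
      fun c => Quotient.liftOn' c (fun h => Quotient.mk (orbitRel Γ S) (h⁻¹ • x)) pwd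
    have hpmk : ∀ h : H, p (QuotientGroup.mk h) = Quotient.mk (orbitRel Γ S) (h⁻¹ • x) :=
      fun h => rfl
    have hpO : ∀ c, p c ∈ φ ⁻¹' {O'} := by
      intro c
      induction c using Quotient.inductionOn' with
      | h h =>
        show φ (Quotient.mk (orbitRel Γ S) (h⁻¹ • x)) ∈ ({O'} : Set (Quotient (orbitRel H S)))
        rw [Set.mem_singleton_iff, hφmk]
        show Quotient.mk (orbitRel H S) (h⁻¹ • x) = O'
        conv_rhs => rw [← Quotient.out_eq O']
        exact Quotient.sound (MulAction.mem_orbit x h⁻¹)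
    let p' : H ⧸ Γ → ↥(φ ⁻¹' {O'}) := fun c => ⟨p c, hpO c⟩
    have main : ∀ O₀ : ↥(φ ⁻¹' {O'}),
        ((Nat.card (stabilizer Γ (Quotient.out (O₀ : Quotient (orbitRel Γ S))))) : ℝ≥0∞)⁻¹
          = ∑' _c : p' ⁻¹' {O₀}, ((Nat.card K : ℝ≥0∞))⁻¹ := by
      intro O₀
      set O : Quotient (orbitRel Γ S) := (O₀ : Quotient (orbitRel Γ S)) with hOdef
      have hO : φ O = O' := O₀.2
      set y : S := Quotient.out O with hy
      have hyx : y ∈ orbit H x := by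
        have h1 : Quotient.mk (orbitRel H S) y = O' := by
          rw [← hO]
          conv_rhs => rw [← Quotient.out_eq O]
          exact (hφmk y).symm
        conv_rhs at h1 => rw [← Quotient.out_eq O']
        exact Quotient.exact h1
      obtain ⟨g, hg0⟩ := hyx
      have hg : g • x = y := hg0
      let c₀ : H ⧸ Γ := QuotientGroup.mk g⁻¹
      have hfiber : p' ⁻¹' {O₀} = orbit K c₀ := by
        apply Set.eq_of_subset_of_subset
        · intro c hc
          induction c using Quotient.inductionOn' with
          | h h =>
            rw [Set.mem_preimage, Set.mem_singleton_iff] at hc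
            have hc' : Quotient.mk (orbitRel Γ S) (h⁻¹ • x) = O :=
              congrArg Subtype.val hc
            conv_rhs at hc' => rw [← Quotient.out_eq O]
            obtain ⟨γ, hγ⟩ := Quotient.exact hc'
            have hγ' : (γ : H) • y = h⁻¹ • x := hγ
            have hkK : (h * (γ : H) * g) • x = x := by
              rw [mul_smul, mul_smul, hg, hγ', smul_smul, mul_inv_cancel, one_smul]
            refine ⟨⟨h * (γ : H) * g, hkK⟩, ?_⟩
            show QuotientGroup.mk ((h * (γ : H) * g) * g⁻¹) = Quotient.mk'' h
            rw [QuotientGroup.eq]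
            have heq : ((h * (γ : H) * g) * g⁻¹)⁻¹ * h = (γ : H)⁻¹ := by group
            rw [heq]
            exact Γ.inv_mem γ.2
        · rintro c ⟨k, rfl⟩
          rw [Set.mem_preimage, Set.mem_singleton_iff]
          apply Subtype.ext
          show p ((k : ↥K) • c₀) = O
          have h1 : (k : ↥K) • c₀ = QuotientGroup.mk ((k : H) * g⁻¹) := rfl
          rw [h1, hpmk]
          have h2 : ((k : H) * g⁻¹)⁻¹ • x = y := by
            rw [mul_inv_rev, inv_inv, mul_smul, ← hg]
            congr 1
            exact (K.inv_mem k.2 : (k : H)⁻¹ • x = x)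
          rw [h2]
          exact Quotient.out_eq O
      -- cardinalities
      haveI := Fintype.ofFinite (↥K)
      haveI : Finite (orbit K c₀) := Subtype.finite
      haveI := Fintype.ofFinite (↥(orbit K c₀))
      haveI : Finite (stabilizer K c₀) := Subtype.finite
      haveI := Fintype.ofFinite (↥(stabilizer K c₀))
      have horb := MulAction.card_orbit_mul_card_stabilizer_eq_card_group K c₀
      have horb' : Nat.card (orbit K c₀) * Nat.card (stabilizer K c₀) = Nat.card K := by
        simpa [Nat.card_eq_fintype_card] using horb
      -- the stabilizer of c₀ in K is isomorphic to the Γ-stabilizer of y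
      have hstab : Nat.card (stabilizer K c₀) = Nat.card (stabilizer Γ y) := by
        apply Nat.card_congr
        refine ⟨fun k => ⟨⟨g * (k : H) * g⁻¹, ?_⟩, ?_⟩,
                fun γ => ⟨⟨g⁻¹ * (γ : H) * g, ?_⟩, ?_⟩, ?_, ?_⟩
        · -- g k g⁻¹ ∈ Γ
          have hk2 : QuotientGroup.mk (((k : K) : H) * g⁻¹) = QuotientGroup.mk g⁻¹ := k.2
          have hm : (((k : K) : H) * g⁻¹)⁻¹ * g⁻¹ ∈ Γ := QuotientGroup.eq.mp hk2
          have heq : ((((k : K) : H) * g⁻¹)⁻¹ * g⁻¹)⁻¹ = g * ((k : K) : H) * g⁻¹ := by group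
          rw [← heq]
          exact Γ.inv_mem hm
        · -- stabilizes y
          show (⟨g * ((k : K) : H) * g⁻¹, _⟩ : Γ) • y = y
          show (g * ((k : K) : H) * g⁻¹) • y = y
          have hgy : g⁻¹ • y = x := by rw [← hg, inv_smul_smul]
          rw [mul_smul, mul_smul, hgy, (k : K).2, hg]
        · -- g⁻¹ γ g ∈ K, i.e. stabilizes x
          show (g⁻¹ * ((γ : Γ) : H) * g) • x = x
          have hγy : ((γ : Γ) : H) • y = y := γ.2
          rw [mul_smul, mul_smul, hg, hγy, ← hg, inv_smul_smul]
        · -- stabilizes c₀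
          show (⟨g⁻¹ * ((γ : Γ) : H) * g, _⟩ : K) • c₀ = c₀
          show QuotientGroup.mk ((g⁻¹ * ((γ : Γ) : H) * g) * g⁻¹) = QuotientGroup.mk g⁻¹
          rw [QuotientGroup.eq]
          have heq : ((g⁻¹ * ((γ : Γ) : H) * g) * g⁻¹)⁻¹ * g⁻¹ = ((γ : Γ) : H)⁻¹ := by group
          rw [heq]
          exact Γ.inv_mem (γ : Γ).2
        · intro k
          apply Subtype.ext
          apply Subtype.ext
          show g⁻¹ * (g * ((k : K) : H) * g⁻¹) * g = ((k : K) : H)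
          group
        · intro γ
          apply Subtype.ext
          apply Subtype.ext
          show g * (g⁻¹ * ((γ : Γ) : H) * g) * g⁻¹ = ((γ : Γ) : H)
          group
      -- now the arithmetic
      haveI : Finite (p' ⁻¹' {O₀}) := Subtype.finite
      rw [tsum_const_card]
      have hc1 : Nat.card (p' ⁻¹' {O₀}) = Nat.card (orbit K c₀) := by rw [hfiber]
      rw [hc1, ← hstab]
      have horbne : ((Nat.card (orbit K c₀) : ℝ≥0∞)) ≠ 0 := by
        haveI : Nonempty (orbit K c₀) := ⟨⟨c₀, MulAction.mem_orbit_self c₀⟩⟩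
        exact_mod_cast Nat.card_pos.ne'
      have hN : ((Nat.card K : ℝ≥0∞)) =
          (Nat.card (orbit K c₀) : ℝ≥0∞) * (Nat.card (stabilizer K c₀) : ℝ≥0∞) := by
        rw [← horb']
        push_cast
        ring
      rw [hN, ENNReal.mul_inv (Or.inl horbne) (Or.inl (ENNReal.natCast_ne_top _)),
        ← mul_assoc, ENNReal.mul_inv_cancel horbne (ENNReal.natCast_ne_top _), one_mul]
    rw [tsum_congr main,
      ENNReal.tsum_fiberwise (fun _ : H ⧸ Γ => ((Nat.card K : ℝ≥0∞))⁻¹) p',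
      tsum_const_card, ← Subgroup.index_eq_card, hd]
  calc ∑' O : Quotient (orbitRel Γ S),
        ((Nat.card (stabilizer Γ (Quotient.out O))) : ℝ≥0∞)⁻¹
      = ∑' O' : Quotient (orbitRel H S), ∑' O : φ ⁻¹' {O'},
          ((Nat.card (stabilizer Γ (Quotient.out (O : Quotient (orbitRel Γ S))))) : ℝ≥0∞)⁻¹ :=
        (ENNReal.tsum_fiberwise _ φ).symm
    _ = ∑' O' : Quotient (orbitRel H S),
          (d : ℝ≥0∞) * ((Nat.card (stabilizer H (Quotient.out O'))) : ℝ≥0∞)⁻¹ :=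
        tsum_congr key
    _ = (d : ℝ≥0∞) * ∑' O' : Quotient (orbitRel H S),
          ((Nat.card (stabilizer H (Quotient.out O'))) : ℝ≥0∞)⁻¹ := ENNReal.tsum_mul_left
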